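/- For every regular uncountable cardinal $\kappa$ and every prime $p$, there exists an abelian $p$-group $G$ (i.e., an abelian group all of whose elements have order a power of $p$) that is not the internal direct sum of any family of subgroups each of cardinality less than $\kappa$. -/

import Mathlib

open Cardinal Ordinal

noncomputable section

namespace PGrpCtr

variable {A : Type*} [AddCommGroup A]

/-- transfinite `p^α H` -/
def pV (p : ℤ) (H : AddSubgroup A) (α : Ordinal) : AddSubgroup A :=
  H ⊓ ⨅ β : Set.Iio α, AddSubgroup.map (zsmulAddGroupHom p) (pV p H β.1)
termination_by α
decreasing_by exact β.2

lemma map_zsmul_le (p : ℤ) (S : AddSubgroup A) :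
    S.map (zsmulAddGroupHom p) ≤ S := by
  rintro x ⟨y, hy, rfl⟩
  exact S.zsmul_mem hy p

lemma pV_le_self (p : ℤ) (H : AddSubgroup A) (α : Ordinal) : pV p H α ≤ H := by
  rw [pV]; exact inf_le_left

lemma pV_le_map (p : ℤ) (H : AddSubgroup A) {β α : Ordinal} (h : β < α) :
    pV p H α ≤ (pV p H β).map (zsmulAddGroupHom p) := by
  rw [pV]
  exact inf_le_right.trans (iInf_le _ (⟨β, h⟩ : Set.Iio α))

lemma pV_anti (p : ℤ) (H : AddSubgroup A) {β α : Ordinal} (h : β ≤ α) :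
    pV p H α ≤ pV p H β := by
  rcases eq_or_lt_of_le h with rfl | h
  · exact le_rfl
  · exact (pV_le_map p H h).trans (map_zsmul_le p _)

lemma mem_pV_iff (p : ℤ) (H : AddSubgroup A) (α : Ordinal) (x : A) :
    x ∈ pV p H α ↔ x ∈ H ∧ ∀ β < α, x ∈ (pV p H β).map (zsmulAddGroupHom p) := by
  rw [pV]
  simp only [AddSubgroup.mem_inf, AddSubgroup.mem_iInf, Subtype.forall, Set.mem_Iio]

lemma pV_mono (p : ℤ) {H K : AddSubgroup A} (hHK : H ≤ K) :
    ∀ α, pV p H α ≤ pV p K α := by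
  intro α
  induction α using Ordinal.induction with
  | h α IH =>
    intro x hx
    rw [mem_pV_iff] at hx ⊢
    refine ⟨hHK hx.1, fun β hβ => ?_⟩
    exact AddSubgroup.map_mono (IH β hβ) (hx.2 β hβ)

lemma pV_succ (p : ℤ) (H : AddSubgroup A) (α : Ordinal) :
    pV p H (α + 1) = (pV p H α).map (zsmulAddGroupHom p) := by
  refine le_antisymm (pV_le_map p H (lt_add_one α)) ?_
  conv_rhs => rw [pV]
  refine le_inf ((map_zsmul_le p _).trans (pV_le_self p H α)) (le_iInf ?_)
  rintro ⟨β, hβ⟩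
  exact AddSubgroup.map_mono (pV_anti p H (Order.lt_add_one_iff.mp hβ))

lemma pV_stab (p : ℤ) (H : AddSubgroup A) {α : Ordinal}
    (h : pV p H α = pV p H (α + 1)) :
    ∀ γ, α ≤ γ → pV p H γ = pV p H α := by
  intro γ
  induction γ using Ordinal.induction with
  | h γ IH =>
    intro hγ
    refine le_antisymm (pV_anti p H hγ) ?_
    intro x hx
    rw [mem_pV_iff]
    refine ⟨pV_le_self p H α hx, fun β hβ => ?_⟩
    rcases le_or_gt α β with hab | hab
    · have : pV p H β = pV p H α := IH β hβ hab
      rw [this]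
      have : x ∈ pV p H (α + 1) := h ▸ hx
      exact (pV_le_map p H (lt_add_one α)) this
    · exact (pV_le_map p H hab) hx

/-- if the chain is strictly decreasing below `κ.ord` then `H` has at least `κ` elements -/
lemma pV_exists_stab (p : ℤ) (H : AddSubgroup A) (κ : Cardinal) (hH : #H < κ) :
    ∃ β < κ.ord, pV p H β = pV p H (β + 1) := by
  by_contra hs
  push_neg at hs
  have hex : ∀ b : Set.Iio κ.ord, ∃ x : A,
      x ∈ pV p H b.1 ∧ x ∉ pV p H (b.1 + 1) := by
    rintro ⟨β, hβ⟩
    have hne := hs β hβ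
    have hle := pV_anti p H (le_of_lt (lt_add_one β))
    rcases SetLike.exists_of_lt (lt_of_le_of_ne hle (fun h => hne h.symm)) with ⟨x, hx1, hx2⟩
    exact ⟨x, hx1, hx2⟩
  choose f hf1 hf2 using hex
  have hinj : Function.Injective (fun b => (⟨f b, pV_le_self p H _ (hf1 b)⟩ : ↥H)) := by
    intro b b' hb
    by_contra hne
    simp only [Subtype.mk_eq_mk] at hb
    have hne' : b.1 ≠ b'.1 := fun h => hne (Subtype.ext h)
    rcases lt_or_gt_of_ne hne' with h | h
    · have hsucc : b.1 + 1 ≤ b'.1 := Order.add_one_le_iff.mpr h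
      exact hf2 b (hb ▸ pV_anti p H hsucc (hf1 b'))
    · have hsucc : b'.1 + 1 ≤ b.1 := Order.add_one_le_iff.mpr h
      exact hf2 b' (hb ▸ pV_anti p H hsucc (hf1 b))
  set e := Ordinal.ToType.mk (o := κ.ord)
  have hinj2 : Function.Injective
      (fun w : κ.ord.ToType => (⟨f (e.symm w), pV_le_self p H _ (hf1 (e.symm w))⟩ : ↥H)) := by
    intro w w' hw
    have := hinj hw
    have : e.symm w = e.symm w' := this
    exact e.symm.injective this
  have h1 := Cardinal.mk_le_of_injective hinj2
  rw [Cardinal.mk_ord_toType] at h1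
  exact absurd (h1.trans_lt hH) (lt_irrefl κ)

/-- projections of elements of `pV p ⊤ α` land in `pV p K α` -/
lemma proj_mem_pV (p : ℤ) (f : A →+ A) (K : AddSubgroup A) (hf : ∀ a, f a ∈ K) :
    ∀ α, ∀ x ∈ pV p (⊤ : AddSubgroup A) α, f x ∈ pV p K α := by
  intro α
  induction α using Ordinal.induction with
  | h α IH =>
    intro x hx
    rw [mem_pV_iff] at hx ⊢
    refine ⟨hf x, fun β hβ => ?_⟩
    rcases hx.2 β hβ with ⟨y, hy, rfl⟩
    exact ⟨f y, IH β hβ y hy, by simp [zsmulAddGroupHom_apply, map_zsmul]⟩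

end PGrpCtr

namespace PGrpCtr

open Cardinal Ordinal List
open scoped Classical

universe u

variable (p : ℕ) (lam : Ordinal.{u})

/-- the circle group `ℚ/ℤ` -/
abbrev QQ : Type := AddCircle (1 : ℚ)

/-- the tree of strictly decreasing lists -/
def TT (lam : Ordinal.{u}) : Type u := {l : List lam.ToType // l.IsChain (· > ·)}

/-- `1/p^(k+1)` in `ℚ/ℤ` -/
def cc (k : ℕ) : QQ := ((((p : ℚ) ^ (k + 1))⁻¹ : ℚ) : QQ)

variable {p}

lemma ppos (hp : 1 < p) : (0 : ℚ) < (p : ℚ) := by positivity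

lemma cc_ne_zero (hp : 1 < p) (k : ℕ) : cc p k ≠ 0 := by
  intro h
  rw [cc, AddCircle.coe_eq_zero_iff] at h
  obtain ⟨n, hn⟩ := h
  rw [zsmul_eq_mul, mul_one] at hn
  have h1 : (1:ℚ) < (p:ℚ) ^ (k+1) := by
    apply one_lt_pow₀ (by exact_mod_cast hp) (by omega)
  have hpos : (0:ℚ) < ((p:ℚ)^(k+1))⁻¹ := by positivity
  have hlt : ((p:ℚ)^(k+1))⁻¹ < 1 := by
    rw [inv_lt_one_iff₀]; right; exact h1
  rw [← hn] at hpos hlt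
  have : (0:ℤ) < n := by exact_mod_cast hpos
  have : (n:ℚ) ≥ 1 := by exact_mod_cast this
  linarith

lemma smul_cc (hp : 1 < p) (k : ℕ) : (p : ℤ) • cc p (k + 1) = cc p k := by
  have hne : (p:ℚ) ≠ 0 := ne_of_gt (ppos hp)
  rw [cc, cc, ← QuotientAddGroup.mk_zsmul]
  congr 1
  rw [zsmul_eq_mul]
  push_cast
  rw [pow_succ]
  field_simp

lemma smul_cc_zero (hp : 1 < p) : (p : ℤ) • cc p 0 = 0 := by
  have hne : (p:ℚ) ≠ 0 := ne_of_gt (ppos hp)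
  rw [cc, ← QuotientAddGroup.mk_zsmul]
  have : (p:ℤ) • ((p:ℚ)^(0+1))⁻¹ = (1:ℚ) := by
    rw [zsmul_eq_mul]; push_cast; field_simp
  rw [this]
  exact AddCircle.coe_period (1:ℚ)

lemma pow_smul_cc (hp : 1 < p) (n k : ℕ) (h : k ≤ n) :
    (p ^ (n + 1) : ℕ) • cc p k = 0 := by
  have hne : (p:ℚ) ≠ 0 := ne_of_gt (ppos hp)
  rw [cc, ← QuotientAddGroup.mk_nsmul]
  have heq : (p ^ (n+1) : ℕ) • ((p:ℚ)^(k+1))⁻¹ = ((p:ℚ))^(n - k) := by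
    rw [_root_.nsmul_eq_mul]
    push_cast
    have : n + 1 = (k + 1) + (n - k) := by omega
    rw [this, pow_add]
    field_simp
  rw [heq]
  rw [AddCircle.coe_eq_zero_iff]
  exact ⟨(p:ℤ)^(n-k), by rw [zsmul_eq_mul, mul_one]; push_cast; ring⟩

variable (p)

/-- the finset of prefixes of `u` -/
noncomputable def prefFin (u : TT lam) : Finset (TT lam) :=
  (Finset.range (u.1.length + 1)).image (fun k => (⟨u.1.take k, u.2.take k⟩ : TT lam))

lemma mem_prefFin {lam : Ordinal.{u}} {u s : TT lam} : s ∈ prefFin lam u ↔ s.1 <+: u.1 := by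
  constructor
  · intro hs
    rw [prefFin] at hs
    replace hs := Finset.mem_image.mp hs
    obtain ⟨k, _, rfl⟩ := hs
    exact List.take_prefix k u.1
  · intro hs
    rw [prefFin]
    apply Finset.mem_image.mpr
    refine ⟨s.1.length, ?_, ?_⟩
    · rw [Finset.mem_range]
      exact Nat.lt_succ_of_le hs.length_le
    · exact Subtype.ext (List.prefix_iff_eq_take.mp hs).symm

/-- the generators -/
noncomputable def yf (u : TT lam) : TT lam →₀ QQ :=
  Finsupp.onFinset (prefFin lam u)
    (fun t => if t.1 <+: u.1 then cc p (u.1.length - t.1.length) else 0)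
    (fun t h => mem_prefFin.mpr (by by_contra hc; apply h; simp [hc]))

lemma yf_apply (u t : TT lam) :
    yf p lam u t = if t.1 <+: u.1 then cc p (u.1.length - t.1.length) else 0 :=
  Finsupp.onFinset_apply

/-- children predicate -/
def isChild (t s : TT lam) : Prop := ∃ ν, s.1 = t.1 ++ [ν]

/-- sum over children of `t`, as an additive hom -/
noncomputable def childHom (t : TT lam) : (TT lam →₀ QQ) →+ QQ :=
  Finsupp.liftAddHom (fun s => if isChild lam t s then AddMonoidHom.id QQ else 0)

lemma childHom_apply (t : TT lam) (x : TT lam →₀ QQ) :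
    childHom lam t x = ∑ s ∈ x.support, (if isChild lam t s then x s else 0) := by
  rw [childHom, Finsupp.liftAddHom_apply, Finsupp.sum]
  apply Finset.sum_congr rfl
  intro s _
  by_cases h : isChild lam t s <;> simp [h]

end PGrpCtr

namespace PGrpCtr

open Cardinal Ordinal List
open scoped Classical

universe u

variable (p : ℕ) (lam : Ordinal.{u})

/-- The key relation: `p • (y_u)_t` equals the sum of `(y_u)_s` over children `s` of `t`. -/
lemma gen_eq (hp : 1 < p) (u t : TT lam) :
    (p : ℤ) • yf p lam u t = childHom lam t (yf p lam u) := by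
  have hsum : childHom lam t (yf p lam u)
      = ∑ s ∈ prefFin lam u, (if isChild lam t s then yf p lam u s else 0) := by
    rw [childHom_apply]
    apply Finset.sum_subset Finsupp.support_onFinset_subset
    intro s _ hs
    rw [Finsupp.notMem_support_iff] at hs
    have hs' : yf p lam u s = 0 := hs
    simp [hs']
  rw [hsum, yf_apply]
  by_cases hpre : t.1 <+: u.1
  · by_cases hne : t = u
    · subst hne
      rw [if_pos hpre, Nat.sub_self, smul_cc_zero hp]
      symm
      apply Finset.sum_eq_zero
      intro s hs
      rw [if_neg]
      rintro ⟨ν, hν⟩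
      have h1 : s.1.length = t.1.length + 1 := by rw [hν]; simp
      have h2 : s.1.length ≤ t.1.length := (mem_prefFin.mp hs).length_le
      omega
    · -- proper prefix
      have hlen : t.1.length < u.1.length := by
        rcases lt_or_eq_of_le hpre.length_le with h | h
        · exact h
        · exact absurd (Subtype.ext (List.IsPrefix.eq_of_length hpre h)) hne
      set n := t.1.length with hn
      have hchain : (u.1.take (n+1)).IsChain (· > ·) := u.2.take (n+1)
      set s₀ : TT lam := ⟨u.1.take (n+1), hchain⟩ with hs₀
      have hs₀u : s₀.1 <+: u.1 := List.take_prefix _ _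
      have hs₀len : s₀.1.length = n + 1 := by
        simp [hs₀, List.length_take]
        omega
      have htake : t.1 = u.1.take n := List.prefix_iff_eq_take.mp hpre
      have hs₀child : isChild lam t s₀ := by
        refine ⟨u.1.get ⟨n, hlen⟩, ?_⟩
        show u.1.take (n+1) = t.1 ++ [u.1.get ⟨n, hlen⟩]
        rw [List.take_succ, htake]
        congr 1
        rw [List.getElem?_eq_getElem hlen]
        simp
      have hval : ∑ s ∈ prefFin lam u, (if isChild lam t s then yf p lam u s else 0)
          = (if isChild lam t s₀ then yf p lam u s₀ else 0) := by
        apply Finset.sum_eq_single s₀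
        · intro s hs hne'
          rw [if_neg]
          rintro ⟨ν, hν⟩
          apply hne'
          have hpre' : s.1 <+: u.1 := mem_prefFin.mp hs
          have hslen : s.1.length = n + 1 := by rw [hν]; simp; omega
          apply Subtype.ext
          rw [List.prefix_iff_eq_take.mp hpre', hslen]
        · intro hmem
          exact absurd (mem_prefFin.mpr hs₀u) hmem
      rw [hval, if_pos hs₀child, if_pos hpre, yf_apply, if_pos hs₀u, hs₀len]
      have harith : u.1.length - n = (u.1.length - (n+1)) + 1 := by omega
      rw [harith, smul_cc hp]
  · rw [if_neg hpre, smul_zero]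
    symm
    apply Finset.sum_eq_zero
    intro s hs
    rw [if_neg]
    rintro ⟨ν, hν⟩
    apply hpre
    have : t.1 <+: s.1 := by rw [hν]; exact List.prefix_append t.1 [ν]
    exact this.trans (mem_prefFin.mp hs)

end PGrpCtr

namespace PGrpCtr

open Cardinal Ordinal List
open scoped Classical

universe u

variable (p : ℕ) (lam : Ordinal.{u})

lemma yf_ext (hp : 1 < p) (u : TT lam) (ν : lam.ToType)
    (hc : (u.1 ++ [ν]).IsChain (· > ·)) :
    (p : ℤ) • yf p lam ⟨u.1 ++ [ν], hc⟩ = yf p lam u := by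
  ext t
  rw [Finsupp.smul_apply, yf_apply p lam ⟨u.1 ++ [ν], hc⟩, yf_apply]
  by_cases h1 : t.1 <+: u.1
  · have h2 : t.1 <+: u.1 ++ [ν] := h1.trans (List.prefix_append u.1 [ν])
    rw [if_pos h1, if_pos h2]
    have hlen : t.1.length ≤ u.1.length := h1.length_le
    have harith : (u.1 ++ [ν]).length - t.1.length = (u.1.length - t.1.length) + 1 := by
      simp only [List.length_append, List.length_singleton]
      omega
    rw [harith, smul_cc hp]
  · rw [if_neg h1]
    by_cases h2 : t.1 <+: u.1 ++ [ν]
    · rw [if_pos h2]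
      rcases List.prefix_concat_iff.mp h2 with h3 | h3
      · rw [h3]
        simp only [List.length_append, List.length_singleton, Nat.sub_self]
        exact smul_cc_zero hp
      · exact absurd h3 h1
    · rw [if_neg h2, smul_zero]

lemma yf_tors (hp : 1 < p) (u : TT lam) :
    (p ^ (u.1.length + 1) : ℕ) • yf p lam u = 0 := by
  ext t
  rw [Finsupp.smul_apply, yf_apply, Finsupp.coe_zero, Pi.zero_apply]
  by_cases h1 : t.1 <+: u.1
  · rw [if_pos h1]
    exact pow_smul_cc hp _ _ (by have := h1.length_le; omega)
  · rw [if_neg h1, smul_zero]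

/-- the group we build: subgroup of `TT →₀ ℚ/ℤ` generated by the `y_u` -/
noncomputable def Gsub : AddSubgroup (TT lam →₀ QQ) :=
  AddSubgroup.closure (Set.range (yf p lam))

lemma key_prop (hp : 1 < p) (x : TT lam →₀ QQ) (hx : x ∈ Gsub p lam) (t : TT lam) :
    (p : ℤ) • x t = childHom lam t x := by
  have hle : Gsub p lam ≤ ⨅ t : TT lam,
      AddMonoidHom.eqLocus
        ((zsmulAddGroupHom (p:ℤ)).comp (Finsupp.applyAddHom t))
        (childHom lam t) := by
    rw [Gsub, AddSubgroup.closure_le]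
    rintro _ ⟨u, rfl⟩
    rw [SetLike.mem_coe, AddSubgroup.mem_iInf]
    intro t'
    show ((zsmulAddGroupHom (p:ℤ)).comp (Finsupp.applyAddHom t')) (yf p lam u)
        = childHom lam t' (yf p lam u)
    rw [AddMonoidHom.comp_apply, Finsupp.applyAddHom_apply, zsmulAddGroupHom_apply]
    exact gen_eq p lam hp u t'
  have := hle hx
  rw [AddSubgroup.mem_iInf] at this
  have ht := this t
  have ht' : ((zsmulAddGroupHom (p:ℤ)).comp (Finsupp.applyAddHom t)) x = childHom lam t x := ht
  rw [AddMonoidHom.comp_apply, Finsupp.applyAddHom_apply, zsmulAddGroupHom_apply] at ht'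
  exact ht'

/-- the subgroup of `p`-power torsion elements -/
def torsSub : AddSubgroup (TT lam →₀ QQ) where
  carrier := {x | ∃ n : ℕ, (p ^ n : ℕ) • x = 0}
  zero_mem' := ⟨0, smul_zero _⟩
  add_mem' := by
    rintro a b ⟨n, hn⟩ ⟨m, hm⟩
    refine ⟨n + m, ?_⟩
    have ha : (p ^ (n + m) : ℕ) • a = 0 := by
      rw [pow_add, mul_comm, mul_smul, hn, smul_zero]
    have hb : (p ^ (n + m) : ℕ) • b = 0 := by
      rw [pow_add, mul_smul, hm, smul_zero]
    rw [smul_add, ha, hb, add_zero]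
  neg_mem' := by
    rintro a ⟨n, hn⟩
    exact ⟨n, by rw [smul_neg, hn, neg_zero]⟩

lemma Gsub_le_tors (hp : 1 < p) : Gsub p lam ≤ torsSub p lam := by
  rw [Gsub, AddSubgroup.closure_le]
  rintro _ ⟨u, rfl⟩
  exact ⟨u.1.length + 1, yf_tors p lam hp u⟩

end PGrpCtr

namespace PGrpCtr

open Cardinal Ordinal List
open scoped Classical

universe u

variable (p : ℕ) (lam : Ordinal.{u})

/-- ordinal of the last entry of a node (`lam` for the root) -/
noncomputable def lastVal (t : TT lam) : Ordinal.{u} :=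
  if h : t.1 = [] then lam else ((Ordinal.ToType.mk (o := lam)).symm (t.1.getLast h)).1

lemma lastVal_lt {lam : Ordinal.{u}} {t : TT lam} (h : t.1 ≠ []) : lastVal lam t < lam := by
  rw [lastVal, dif_neg h]
  exact ((Ordinal.ToType.mk (o := lam)).symm (t.1.getLast h)).2

lemma lastVal_child {lam : Ordinal.{u}} {t s : TT lam} (hs : isChild lam t s) :
    lastVal lam s < lastVal lam t := by
  obtain ⟨ν, hν⟩ := hs
  have hsne : s.1 ≠ [] := by rw [hν]; simp
  have hgl : ∀ h, s.1.getLast h = ν := by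
    obtain ⟨sl, hsc⟩ := s
    simp only at hν
    subst hν
    intro h
    simp [List.getLast_append]
  by_cases ht : t.1 = []
  · rw [lastVal, lastVal, dif_neg hsne, dif_pos ht]
    exact ((Ordinal.ToType.mk (o := lam)).symm (s.1.getLast hsne)).2
  · rw [lastVal, lastVal, dif_neg hsne, dif_neg ht]
    have hchain := s.2
    rw [hν, List.isChain_append] at hchain
    have hgt : t.1.getLast ht > ν := by
      apply hchain.2.2
      · rw [List.getLast?_eq_getLast ht]; rfl
      · rfl
    rw [hgl hsne]
    exact Subtype.coe_lt_coe.mpr ((Ordinal.ToType.mk (o := lam)).symm.lt_iff_lt.mpr hgt)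
  
/-- the valuation -/
noncomputable def vval (x : TT lam →₀ QQ) : Ordinal.{u} :=
  sInf {o | ∃ t, x t ≠ 0 ∧ lastVal lam t = o}

lemma vstep (hp : 1 < p) (x : TT lam →₀ QQ)
    (hx : ∀ t, (p : ℤ) • x t = childHom lam t x)
    (hpx : (p : ℤ) • x ≠ 0) : vval lam x < vval lam ((p : ℤ) • x) := by
  have hne : {o | ∃ t, ((p:ℤ) • x) t ≠ 0 ∧ lastVal lam t = o}.Nonempty := by
    have : ∃ t, ((p:ℤ) • x) t ≠ 0 := by
      by_contra h
      push_neg at h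
      exact hpx (Finsupp.ext fun t => by rw [h t, Finsupp.coe_zero, Pi.zero_apply])
    obtain ⟨t, ht⟩ := this
    exact ⟨lastVal lam t, t, ht, rfl⟩
  have hmem := csInf_mem hne
  obtain ⟨t₀, ht₀, hlast⟩ := hmem
  rw [Finsupp.smul_apply, hx t₀, childHom_apply] at ht₀
  obtain ⟨s, _, hs⟩ := Finset.exists_ne_zero_of_sum_ne_zero ht₀
  have hchild : isChild lam t₀ s := by
    by_contra h
    rw [if_neg h] at hs
    exact hs rfl
  have hxs : x s ≠ 0 := by rwa [if_pos hchild] at hs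
  calc vval lam x ≤ lastVal lam s :=
        csInf_le (OrderBot.bddBelow _) ⟨s, hxs, rfl⟩
    _ < lastVal lam t₀ := lastVal_child hchild
    _ = vval lam ((p:ℤ) • x) := hlast

lemma no_div_chain (hp : 1 < p) (d : ℕ → (TT lam →₀ QQ))
    (hmem : ∀ n, d n ∈ Gsub p lam)
    (hstep : ∀ n, (p : ℤ) • d (n + 1) = d n) (h0 : d 0 ≠ 0) : False := by
  have hne : ∀ n, d n ≠ 0 := by
    intro n
    induction n with
    | zero => exact h0
    | succ k ih =>
      intro h
      apply ih
      rw [← hstep k, h, smul_zero]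
  have hdec : ∀ n, vval lam (d (n + 1)) < vval lam (d n) := by
    intro n
    have := vstep p lam hp (d (n + 1)) (key_prop p lam hp _ (hmem (n + 1)))
      (by rw [hstep n]; exact hne n)
    rwa [hstep n] at this
  set S : Set Ordinal.{u} := Set.range (fun n => vval lam (d n)) with hS
  have hSne : S.Nonempty := ⟨vval lam (d 0), 0, rfl⟩
  obtain ⟨n₀, hn₀⟩ := Ordinal.lt_wf.min_mem S hSne
  exact Ordinal.lt_wf.not_lt_min S ⟨n₀ + 1, rfl⟩ (hn₀ ▸ hdec n₀)

end PGrpCtr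

namespace PGrpCtr

open Cardinal Ordinal List
open scoped Classical

universe u

variable (p : ℕ) (lam : Ordinal.{u})

/-- generators as elements of the subgroup -/
noncomputable def ySub (u : TT lam) : ↥(Gsub p lam) :=
  ⟨yf p lam u, AddSubgroup.subset_closure ⟨u, rfl⟩⟩

/-- the root node -/
def root : TT lam := ⟨[], List.isChain_nil⟩

lemma yf_root_ne_zero (hp : 1 < p) : yf p lam (root lam) ≠ 0 := by
  intro h
  have := DFunLike.congr_fun h (root lam)
  rw [yf_apply] at this
  simp only [root, List.prefix_refl, if_pos] at this
  exact cc_ne_zero hp 0 this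

/-- the height lemma: the root generator lies in `pV p ⊤ β` for every `β ≤ lam`. -/
lemma height_lemma (hp : 1 < p) (β : Ordinal.{u}) : β ≤ lam →
    ∀ u : TT lam, (u.1 = [] ∨ β ≤ lastVal lam u) →
    ySub p lam u ∈ pV (p : ℤ) (⊤ : AddSubgroup ↥(Gsub p lam)) β := by
  induction β using Ordinal.induction with
  | h β IH =>
    intro hβ u hu
    rw [mem_pV_iff]
    refine ⟨trivial, fun γ hγ => ?_⟩
    have hγlam : γ < lam := hγ.trans_le hβ
    set w : lam.ToType := Ordinal.ToType.mk (o := lam) ⟨γ, hγlam⟩ with hw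
    have hchain : (u.1 ++ [w]).IsChain (· > ·) := by
      rw [List.isChain_append]
      refine ⟨u.2, List.isChain_singleton w, ?_⟩
      intro a ha b hb
      have hb' : b = w := by
        simp only [List.head?_cons, Option.mem_some_iff] at hb
        exact hb.symm
      subst hb'
      by_cases hue : u.1 = []
      · rw [hue] at ha; simp at ha
      · have ha' : a = u.1.getLast hue := by
          rw [List.getLast?_eq_getLast hue, Option.mem_some_iff] at ha
          exact ha.symm
        subst ha'
        -- need : getLast u > w, i.e. w < getLast u
        have hβle : β ≤ lastVal lam u := by
          rcases hu with h | h
          · exact absurd h hue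
          · exact h
        rw [lastVal, dif_neg hue] at hβle
        have hgtlt : (⟨γ, hγlam⟩ : Set.Iio lam) < (Ordinal.ToType.mk (o := lam)).symm (u.1.getLast hue) := by
          rw [← Subtype.coe_lt_coe]
          exact lt_of_lt_of_le hγ hβle
        have h2 := (Ordinal.ToType.mk (o := lam)).lt_iff_lt.mpr hgtlt
        rw [OrderIso.apply_symm_apply] at h2
        exact h2
    set u' : TT lam := ⟨u.1 ++ [w], hchain⟩ with hu'
    have hu'ne : u'.1 ≠ [] := by simp [hu']
    have hlast' : lastVal lam u' = γ := by
      rw [lastVal, dif_neg hu'ne]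
      have hgl : u'.1.getLast hu'ne = w := by
        simp only [hu']
        simp [List.getLast_append]
      rw [hgl, hw, OrderIso.symm_apply_apply]
    have hmemγ : ySub p lam u' ∈ pV (p : ℤ) (⊤ : AddSubgroup ↥(Gsub p lam)) γ :=
      IH γ hγ (hγlam.le) u' (Or.inr (le_of_eq hlast'.symm))
    refine ⟨ySub p lam u', hmemγ, ?_⟩
    apply Subtype.ext
    rw [zsmulAddGroupHom_apply]
    rw [AddSubgroupClass.coe_zsmul]
    exact yf_ext p lam hp u w hchain

end PGrpCtr

universe u

open Cardinal DirectSum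

set_option synthInstance.maxHeartbeats 1000000 in
set_option maxHeartbeats 1000000 in
/-- For every regular uncountable `κ` and every prime `p` there is an
abelian `p`-group that is not the internal direct sum of any family of subgroups each of
cardinality `< κ`. -/
theorem exists_pGroup_not_internal_directSum_of_small_subgroups
    (κ : Cardinal.{u}) (hreg : κ.IsRegular) (hunc : ℵ₀ < κ) (p : ℕ) (hp : p.Prime) :
    ∃ G : AddCommGrpCat.{u}, (∀ g : ↥G, ∃ n : ℕ, p ^ n • g = 0) ∧
      ∀ (ι : Type u) [inst : DecidableEq ι], ∀ Q : ι → AddSubgroup ↥G,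
        DirectSum.IsInternal Q → ¬ ∀ i, #↥(Q i) < κ := by
  classical
  have hp1 : 1 < p := hp.one_lt
  set lam : Ordinal.{u} := κ.ord with hlam
  refine ⟨AddCommGrpCat.of ↥(PGrpCtr.Gsub p lam), ?_, ?_⟩
  · intro g
    obtain ⟨n, hn⟩ := PGrpCtr.Gsub_le_tors p lam hp1 g.2
    refine ⟨n, ?_⟩
    apply Subtype.ext
    rw [AddSubmonoidClass.coe_nsmul]
    exact hn
  · intro ι inst Q hInt hsmall
    set A := ↥(PGrpCtr.Gsub p lam) with hA
    set e : (⨁ i, ↥(Q i)) ≃+ A := AddEquiv.ofBijective (DirectSum.coeAddMonoidHom Q) hInt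
      with he
    set π : ι → (A →+ A) := fun i =>
      ((Q i).subtype).comp ((DFinsupp.evalAddMonoidHom i).comp e.symm.toAddMonoidHom)
      with hπ
    have hπmem : ∀ i a, π i a ∈ Q i := fun i a => (e.symm a i).2
    have hπeq : ∀ i a, π i a = ((e.symm a) i).1 := fun i a => rfl
    set g₀ : A := PGrpCtr.ySub p lam (PGrpCtr.root lam) with hg₀
    have hg₀ne : g₀ ≠ 0 := by
      intro h
      exact PGrpCtr.yf_root_ne_zero p lam hp1 (congrArg Subtype.val h)
    have hg₀V : g₀ ∈ PGrpCtr.pV (p : ℤ) (⊤ : AddSubgroup A) lam :=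
      PGrpCtr.height_lemma p lam hp1 lam le_rfl _ (Or.inl rfl)
    obtain ⟨i, hi⟩ : ∃ i, π i g₀ ≠ 0 := by
      by_contra h
      push_neg at h
      apply hg₀ne
      have h0 : e.symm g₀ = 0 := by
        apply DFinsupp.ext
        intro i
        have hzero : ((e.symm g₀) i).1 = 0 := (hπeq i g₀) ▸ h i
        exact Subtype.ext hzero
      have := e.symm.injective (by rw [h0, map_zero] : e.symm g₀ = e.symm 0)
      exact this
    have hπV : π i g₀ ∈ PGrpCtr.pV (p : ℤ) (Q i) lam :=
      PGrpCtr.proj_mem_pV (p : ℤ) (π i) (Q i) (hπmem i) lam g₀ hg₀V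
    obtain ⟨β, hβlt, hβeq⟩ := PGrpCtr.pV_exists_stab (p : ℤ) (Q i) κ (hsmall i)
    have hconst := PGrpCtr.pV_stab (p : ℤ) (Q i) hβeq
    have hDmap : PGrpCtr.pV (p : ℤ) (Q i) β
        = (PGrpCtr.pV (p : ℤ) (Q i) β).map (zsmulAddGroupHom (p : ℤ)) := by
      conv_lhs => rw [hβeq, PGrpCtr.pV_succ]
    have hmemD : π i g₀ ∈ PGrpCtr.pV (p : ℤ) (Q i) β := by
      rw [← hconst lam hβlt.le]
      exact hπV
    have step : ∀ a : A, a ∈ PGrpCtr.pV (p : ℤ) (Q i) β →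
        ∃ b, b ∈ PGrpCtr.pV (p : ℤ) (Q i) β ∧ (p : ℤ) • b = a := by
      intro a ha
      rw [hDmap, AddSubgroup.mem_map] at ha
      obtain ⟨b, hb, hba⟩ := ha
      exact ⟨b, hb, by rw [← zsmulAddGroupHom_apply]; exact hba⟩
    choose F hF1 hF2 using step
    let d : ℕ → {a : A // a ∈ PGrpCtr.pV (p : ℤ) (Q i) β} := fun n =>
      Nat.rec ⟨π i g₀, hmemD⟩ (fun _ prev => ⟨F prev.1 prev.2, hF1 _ _⟩) n
    have hdstep : ∀ n, (p : ℤ) • (d (n + 1)).1 = (d n).1 := fun n => hF2 _ _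
    apply PGrpCtr.no_div_chain p lam hp1 (fun n => ((d n).1 : PGrpCtr.TT lam →₀ PGrpCtr.QQ))
    · exact fun n => (d n).1.2
    · intro n
      rw [← AddSubgroupClass.coe_zsmul]
      exact congrArg Subtype.val (hdstep n)
    · intro h
      apply hi
      apply Subtype.ext
      exact h
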